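/- Let k ≥ 2 and t ≥ 1 and ε > 0. Then for n sufficiently large, every graph G on n vertices with e(G) ≥ (1 − 1/(k−1) + ε)·binomial(n,2) contains a copy of the Turán graph T_k(kt). -/

import Mathlib

open SimpleGraph

/-- `H` has a copy in `G` (an injective graph homomorphism). -/
def Contains {α β : Type*} (H : SimpleGraph α) (G : SimpleGraph β) : Prop :=
  ∃ f : H →g G, Function.Injective f

/-- Number of edges of a graph. -/
noncomputable def edgeCount {V : Type*} (G : SimpleGraph V) : ℕ := Nat.card G.edgeSet

open Finset


lemma turan_adj (n r : ℕ) (v w : Fin n) :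
    (turanGraph n r).Adj v w ↔ (v:ℕ) % r ≠ (w:ℕ) % r := by
  constructor <;> intro h <;> simpa [turanGraph] using h

noncomputable def pick {α : Type*} (t : ℕ) (s : Finset α) : Finset α :=
  if h : t ≤ s.card then (Finset.exists_subset_card_eq h).choose else ∅

lemma pick_subset {α : Type*} (t : ℕ) (s : Finset α) : pick t s ⊆ s := by
  unfold pick; split
  · exact (Finset.exists_subset_card_eq ‹_›).choose_spec.1
  · exact Finset.empty_subset _

lemma pick_card {α : Type*} {t : ℕ} {s : Finset α} (h : t ≤ s.card) : (pick t s).card = t := by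
  unfold pick; rw [dif_pos h]
  exact (Finset.exists_subset_card_eq h).choose_spec.2


noncomputable def enum {α : Type*} (s : Finset α) {t : ℕ} (h : s.card = t) : Fin t → α :=
  fun q => (s.equivFin.symm (Fin.cast h.symm q) : α)

lemma enum_mem {α : Type*} (s : Finset α) {t : ℕ} (h : s.card = t) (q : Fin t) :
    enum s h q ∈ s := (s.equivFin.symm _).2

lemma enum_inj {α : Type*} (s : Finset α) {t : ℕ} (h : s.card = t) :
    Function.Injective (enum s h) := by
  intro a b hab
  unfold enum at hab
  have h1 := Subtype.coe_injective hab
  have h2 := s.equivFin.symm.injective h1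
  exact Fin.cast_injective _ h2

lemma count_mod (ρ T i : ℕ) (hi : i < ρ) :
    (Finset.univ.filter (fun j : Fin (ρ*T) => (j:ℕ) % ρ = i)).card = T := by
  have hρ : 0 < ρ := lt_of_le_of_lt (Nat.zero_le _) hi
  have : (Finset.univ.filter (fun j : Fin (ρ*T) => (j:ℕ) % ρ = i)).card
      = (Finset.univ : Finset (Fin T)).card := by
    refine Finset.card_bij' (fun j hj => (⟨(j:ℕ)/ρ, ?_⟩ : Fin T))
      (fun q _ => (⟨i + ρ*(q:ℕ), by
        have h2 := q.2
        calc i + ρ*(q:ℕ) < ρ + ρ*(q:ℕ) := by omega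
        _ = ρ*((q:ℕ)+1) := by ring
        _ ≤ ρ*T := Nat.mul_le_mul_left _ (by omega)⟩ : Fin (ρ*T))) ?_ ?_ ?_ ?_
    · rcases Finset.mem_filter.1 hj with ⟨-, hj2⟩
      exact Nat.div_lt_iff_lt_mul hρ |>.2 (lt_of_lt_of_eq j.2 (mul_comm ρ T))
    · intro a ha; exact Finset.mem_univ _
    · intro q _; simp only [Finset.mem_filter, Finset.mem_univ, true_and]
      simpa [Nat.add_mul_mod_self_left] using Nat.mod_eq_of_lt hi
    · intro a ha
      rcases Finset.mem_filter.1 ha with ⟨-, hj⟩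
      apply Fin.ext
      simp only []
      conv_rhs => rw [← Nat.div_add_mod (a:ℕ) ρ]
      omega
    · intro q _
      apply Fin.ext
      simp only []
      rw [Nat.add_mul_div_left _ _ hρ, Nat.div_eq_of_lt hi]
      simp
  simpa using this

variable {V : Type*} [Fintype V] [DecidableEq V] (G : SimpleGraph V) [DecidableRel G.Adj]

/-- degree of `v` into `s`. -/
def dg (s : Finset V) (v : V) : ℕ := (G.neighborFinset v ∩ s).card

lemma two_mul_choose_two (n : ℕ) : 2 * n.choose 2 = n * (n-1) := by
  cases n with
  | zero => simp
  | succ m =>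
    rw [Nat.choose_two_right, Nat.succ_sub_one]
    rw [Nat.mul_div_cancel' ]
    rw [mul_comm]
    exact (Nat.even_mul_succ_self m).two_dvd

lemma cast_choose_two (n : ℕ) : ((n.choose 2 : ℕ) : ℝ) = (n:ℝ) * ((n:ℝ)-1) / 2 := by
  cases n with
  | zero => simp
  | succ m =>
    have := two_mul_choose_two (m+1)
    have : ((2 * (m+1).choose 2 : ℕ) : ℝ) = (((m+1) * m : ℕ) : ℝ) := by
      rw [this]; simp
    push_cast at this
    push_cast
    linarith

lemma choose_two_succ (m : ℕ) : ((m+1).choose 2 : ℝ) = (m.choose 2 : ℝ) + m := by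
  rw [Nat.choose_succ_succ]
  push_cast
  rw [Nat.choose_one_right]
  ring

lemma dg_le_card (s : Finset V) (v : V) (hv : v ∈ s) : dg G s v ≤ s.card - 1 := by
  have h : G.neighborFinset v ∩ s ⊆ s.erase v := by
    intro x hx
    rcases Finset.mem_inter.1 hx with ⟨h1, h2⟩
    exact Finset.mem_erase.2 ⟨by rintro rfl; simp [mem_neighborFinset] at h1, h2⟩
  calc dg G s v ≤ (s.erase v).card := Finset.card_le_card h
  _ = s.card - 1 := Finset.card_erase_of_mem hv

lemma sumdeg_le (s : Finset V) : ∑ u ∈ s, dg G s u ≤ 2 * s.card.choose 2 := by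
  rw [two_mul_choose_two]
  calc ∑ u ∈ s, dg G s u ≤ ∑ u ∈ s, (s.card - 1) :=
        Finset.sum_le_sum (fun u hu => dg_le_card G s u hu)
  _ = s.card * (s.card - 1) := by rw [Finset.sum_const, smul_eq_mul]

lemma sum_swap_dg (s R : Finset V) :
    ∑ v ∈ s, (G.neighborFinset v ∩ R).card = ∑ u ∈ R, dg G s u := by
  have key : ∀ (A B : Finset V), ∀ v,
      (G.neighborFinset v ∩ B).card = ∑ u ∈ B, (if G.Adj v u then 1 else 0) := by
    intro A B v
    rw [← Finset.card_filter]
    congr 1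
    ext x
    simp [Finset.mem_filter, mem_neighborFinset, and_comm]
  calc ∑ v ∈ s, (G.neighborFinset v ∩ R).card
      = ∑ v ∈ s, ∑ u ∈ R, (if G.Adj v u then 1 else 0) :=
        Finset.sum_congr rfl (fun v _ => key s R v)
  _ = ∑ u ∈ R, ∑ v ∈ s, (if G.Adj v u then 1 else 0) := Finset.sum_comm
  _ = ∑ u ∈ R, ∑ v ∈ s, (if G.Adj u v then 1 else 0) := by
        apply Finset.sum_congr rfl; intro u _; apply Finset.sum_congr rfl; intro v _
        simp [G.adj_comm]
  _ = ∑ u ∈ R, dg G s u := by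
        apply Finset.sum_congr rfl; intro u _
        rw [dg, key R s u]

lemma dg_erase (s : Finset V) (v : V) (hv : v ∈ s) (u : V) (hu : u ∈ s.erase v) :
    dg G s u = dg G (s.erase v) u + (if G.Adj u v then 1 else 0) := by
  have h1 : G.neighborFinset u ∩ (s.erase v) = (G.neighborFinset u ∩ s).erase v := by
    ext x; simp only [Finset.mem_inter, Finset.mem_erase]; tauto
  unfold dg
  rw [h1]
  by_cases h : G.Adj u v
  · have hvm : v ∈ G.neighborFinset u ∩ s := by
      simp [Finset.mem_inter, mem_neighborFinset, h, hv]
    rw [Finset.card_erase_of_mem hvm, if_pos h]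
    have : 0 < (G.neighborFinset u ∩ s).card := Finset.card_pos.2 ⟨v, hvm⟩
    omega
  · rw [Finset.erase_eq_of_notMem (by simp [mem_neighborFinset, h]), if_neg h]
    omega

lemma sumdeg_erase (s : Finset V) (v : V) (hv : v ∈ s) :
    ∑ u ∈ s, dg G s u = (∑ u ∈ s.erase v, dg G (s.erase v) u) + 2 * dg G s v := by
  rw [← Finset.add_sum_erase _ _ hv]
  rw [Finset.sum_congr rfl (dg_erase G s v hv)]
  rw [Finset.sum_add_distrib]
  have h2 : ∑ u ∈ s.erase v, (if G.Adj u v then 1 else 0) = dg G s v := by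
    rw [← Finset.card_filter]
    congr 1
    ext x
    simp only [Finset.mem_filter, Finset.mem_erase, dg, Finset.mem_inter, mem_neighborFinset]
    constructor
    · rintro ⟨⟨hne, hxs⟩, hadj⟩; exact ⟨hadj.symm, hxs⟩
    · rintro ⟨hadj, hxs⟩; exact ⟨⟨fun hh => G.irrefl (hh ▸ hadj), hxs⟩, hadj.symm⟩
  rw [h2]
  omega


lemma sumdeg_univ : ∑ v, dg G Finset.univ v = 2 * edgeCount G := by
  have h1 : ∀ v, dg G Finset.univ v = G.degree v := by
    intro v; rw [dg, Finset.inter_univ, SimpleGraph.degree]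
  rw [Finset.sum_congr rfl (fun v _ => h1 v)]
  rw [SimpleGraph.sum_degrees_eq_twice_card_edges]
  congr 1
  simp [edgeCount, Nat.card_coe_set_eq, Set.ncard_eq_toFinset_card', edgeFinset]

lemma delete (c D : ℝ) (hc : 0 ≤ c) :
    ∀ (n : ℕ) (s : Finset V), s.card = n →
    2*(c * (s.card.choose 2 : ℝ) + D) ≤ ((∑ u ∈ s, dg G s u : ℕ) : ℝ) →
    ∃ u ⊆ s, D ≤ (u.card.choose 2 : ℝ) ∧ ∀ v ∈ u, c * ((u.card : ℝ) - 1) < (dg G u v : ℝ) := by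
  intro n
  induction n using Nat.strong_induction_on with
  | _ n ih =>
    intro s hcard hE
    subst hcard
    by_cases hstop : ∀ v ∈ s, c * ((s.card:ℝ)-1) < (dg G s v : ℝ)
    · refine ⟨s, Finset.Subset.refl _, ?_, hstop⟩
      have h2 : ((∑ u ∈ s, dg G s u : ℕ) : ℝ) ≤ 2 * (s.card.choose 2 : ℝ) := by
        have := sumdeg_le G s
        calc ((∑ u ∈ s, dg G s u : ℕ) : ℝ) ≤ ((2 * s.card.choose 2 : ℕ) : ℝ) := Nat.cast_le.2 this
        _ = 2 * (s.card.choose 2 : ℝ) := by push_cast; ring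
      have h3 : 0 ≤ c * (s.card.choose 2 : ℝ) := mul_nonneg hc (Nat.cast_nonneg _)
      linarith
    · push_neg at hstop
      obtain ⟨v, hv, hdv⟩ := hstop
      have hn1 : 1 ≤ s.card := Finset.card_pos.2 ⟨v, hv⟩
      have hcard' : (s.erase v).card = s.card - 1 := Finset.card_erase_of_mem hv
      have he := sumdeg_erase G s v hv
      have heR : ((∑ u ∈ s.erase v, dg G (s.erase v) u : ℕ) : ℝ)
          = ((∑ u ∈ s, dg G s u : ℕ) : ℝ) - 2 * (dg G s v : ℝ) := by
        rw [he]; push_cast; ring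
      have hch : (s.card.choose 2 : ℝ) = ((s.card - 1).choose 2 : ℝ) + ((s.card : ℝ) - 1) := by
        obtain ⟨m, hm⟩ : ∃ m, s.card = m + 1 := ⟨s.card - 1, by omega⟩
        rw [hm]
        simp only [Nat.add_sub_cancel]
        rw [choose_two_succ]
        push_cast; ring
      have hE' : 2*(c * ((s.erase v).card.choose 2 : ℝ) + D)
          ≤ ((∑ u ∈ s.erase v, dg G (s.erase v) u : ℕ) : ℝ) := by
        rw [heR, hcard']
        nlinarith [hdv, hch]
      obtain ⟨u, hu, h1, h2⟩ := ih (s.card - 1) (by omega) (s.erase v) hcard' hE'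
      exact ⟨u, hu.trans (Finset.erase_subset _ _), h1, h2⟩

def ContainsIn {V α : Type*} (G : SimpleGraph V) (s : Finset V) (H : SimpleGraph α) : Prop :=
  ∃ f : H →g G, Function.Injective f ∧ ∀ x, f x ∈ s

lemma containsIn_one {V : Type*} [DecidableEq V] (G : SimpleGraph V) (s : Finset V)
    (T : ℕ) (hT : T ≤ s.card) : ContainsIn G s (turanGraph (1*T) 1) := by
  have hu : (pick T s).card = T := pick_card hT
  refine ⟨⟨fun x => enum (pick T s) hu (Fin.cast (one_mul T) x), ?_⟩, ?_, ?_⟩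
  · intro a b hab
    rw [turan_adj] at hab
    simp [Nat.mod_one] at hab
  · intro a b hab
    have h1 := enum_inj (pick T s) hu hab
    have h2 : ((Fin.cast (one_mul T) a) : ℕ) = ((Fin.cast (one_mul T) b) : ℕ) :=
      congrArg Fin.val h1
    exact Fin.ext h2
  · intro x
    exact pick_subset _ _ (enum_mem _ hu _)

set_option maxHeartbeats 1000000 in
lemma minDeg : ∀ (r t : ℕ), 1 ≤ t → ∀ ε : ℝ, 0 < ε → ∃ N : ℕ,
    ∀ (V : Type) (_ : Fintype V) (_ : DecidableEq V) (G : SimpleGraph V)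
      (_ : DecidableRel G.Adj) (s : Finset V), N ≤ s.card →
      (∀ v ∈ s, (1 - 1/(r:ℝ) + ε) * s.card ≤ (dg G s v : ℝ)) →
      ContainsIn G s (turanGraph ((r+1)*t) (r+1)) := by
  intro r
  induction r with
  | zero =>
    intro t ht ε hε
    refine ⟨1, ?_⟩
    intro V _ _ G _ s hs hdeg
    have hpos : 0 < s.card := by omega
    obtain ⟨v, hv⟩ := Finset.card_pos.1 hpos
    exfalso
    have h1 := hdeg v hv
    have h2 : (dg G s v : ℝ) ≤ (s.card : ℝ) - 1 := by
      have hle : dg G s v ≤ s.card - 1 := dg_le_card G s v hv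
      have h3 : ((dg G s v : ℕ) : ℝ) ≤ ((s.card - 1 : ℕ) : ℝ) := Nat.cast_le.2 hle
      have h4 : ((s.card - 1 : ℕ) : ℝ) = (s.card : ℝ) - 1 := by
        have : 1 ≤ s.card := hs
        push_cast [Nat.cast_sub this]
        ring
      linarith
    have hcard : (1:ℝ) ≤ (s.card : ℝ) := by exact_mod_cast hs
    norm_num at h1
    nlinarith
  | succ r ih =>
    intro t ht ε hε
    classical
    set ρ := r + 1 with hρdef
    clear_value ρ
    set T : ℕ := max t ⌈(2*t)/ε⌉₊ with hTdef
    have hT1 : 1 ≤ T := le_trans ht (le_max_left _ _)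
    have hTε : 2*(t:ℝ) ≤ ε * T := by
      have h1 : ((2*t:ℝ))/ε ≤ (⌈(2*(t:ℝ))/ε⌉₊ : ℝ) := Nat.le_ceil _
      have h2 : ((⌈(2*(t:ℝ))/ε⌉₊:ℕ):ℝ) ≤ (T:ℝ) := by
        apply Nat.cast_le.2
        rw [hTdef]
        apply le_trans (le_of_eq ?_) (le_max_right _ _)
        norm_cast
      rw [div_le_iff₀ hε] at h1
      nlinarith
    obtain ⟨N₀, hN₀⟩ : ∃ N₀ : ℕ, ∀ (V : Type) (_ : Fintype V) (_ : DecidableEq V)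
        (G : SimpleGraph V) (_ : DecidableRel G.Adj) (s : Finset V), N₀ ≤ s.card →
        (∀ v ∈ s, (1 - 1/(ρ:ℝ) + ε) * s.card ≤ (dg G s v : ℝ)) →
        ContainsIn G s (turanGraph (ρ*T) ρ) := by
      rcases Nat.eq_zero_or_pos r with hr | hr
      · refine ⟨T, ?_⟩
        intro V _ _ G _ s hs _
        have h1 : ρ = 1 := by omega
        subst h1
        exact containsIn_one G s T hs
      · have hrpos : (0:ℝ) < (r:ℝ) := by exact_mod_cast hr
        have hε' : 0 < ε + (1/(r:ℝ) - 1/((r:ℝ)+1)) := by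
          have : 1/((r:ℝ)+1) < 1/(r:ℝ) := by
            apply one_div_lt_one_div_of_lt hrpos
            linarith
          linarith
        obtain ⟨N₀, h⟩ := ih T hT1 _ hε'
        refine ⟨N₀, ?_⟩
        intro V iF iD G iA s hs hdeg
        apply h V iF iD G iA s hs
        intro v hv
        have h3 := hdeg v hv
        have heq : 1 - 1/(r:ℝ) + (ε + (1/(r:ℝ) - 1/((r:ℝ)+1))) = 1 - 1/(ρ:ℝ) + ε := by
          rw [hρdef]; push_cast; ring
        rw [heq]
        exact h3
    set M := Fintype.card (Fin ρ → Finset (Fin (ρ*T))) with hMdef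
    refine ⟨max N₀ (⌈(2*(((ρ*T : ℕ):ℝ) + ((M*t : ℕ):ℝ)) + 1)/ε⌉₊ + 1), ?_⟩
    intro V iF iD G iA s hs hdeg
    have hsN₀ : N₀ ≤ s.card := le_trans (le_max_left _ _) hs
    have hsε : 2*(((ρ*T:ℕ):ℝ) + ((M*t:ℕ):ℝ)) + 1 ≤ ε * s.card := by
      set x : ℝ := 2*(((ρ*T:ℕ):ℝ) + ((M*t:ℕ):ℝ)) + 1 with hx
      have h1 : x/ε ≤ (⌈x/ε⌉₊ : ℝ) := Nat.le_ceil _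
      have h2 : (⌈x/ε⌉₊ + 1 : ℕ) ≤ s.card := le_trans (le_max_right _ _) hs
      have h3 : ((⌈x/ε⌉₊:ℕ):ℝ) + 1 ≤ (s.card : ℝ) := by exact_mod_cast h2
      rw [div_le_iff₀ hε] at h1
      nlinarith
    have hdegρ : ∀ v ∈ s, (1 - 1/(ρ:ℝ) + ε) * s.card ≤ (dg G s v : ℝ) := hdeg
    obtain ⟨f, hfinj, hfs⟩ := hN₀ V iF iD G iA s hsN₀ hdegρ
    set R : Finset V := Finset.univ.image f with hRdef
    have hRcard : R.card = ρ*T := by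
      rw [hRdef, Finset.card_image_of_injective _ hfinj, Finset.card_univ, Fintype.card_fin]
    have hRs : R ⊆ s := by
      intro x hx
      rcases Finset.mem_image.1 hx with ⟨j, -, rfl⟩
      exact hfs j
    set P : ℕ → Finset V := fun i =>
      (Finset.univ.filter (fun j : Fin (ρ*T) => (j:ℕ) % ρ = i)).image f with hPdef
    have hPcard : ∀ i, i < ρ → (P i).card = T := by
      intro i hi
      rw [hPdef]
      simp only []
      rw [Finset.card_image_of_injective _ hfinj, count_mod ρ T i hi]
    have hPR : ∀ i, P i ⊆ R := by
      intro i
      rw [hPdef, hRdef]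
      exact Finset.image_subset_image (Finset.filter_subset _ _)
    set Gd := s.filter (fun v => ∀ i, i < ρ → t ≤ (G.neighborFinset v ∩ P i).card) with hGddef
    have hGds : Gd ⊆ s := Finset.filter_subset _ _
    -- counting
    have hρT0 : (0:ℝ) < ((ρ*T:ℕ):ℝ) := by
      have : 0 < ρ*T := by
        have : 1 ≤ ρ := by omega
        exact Nat.mul_pos this (by omega)
      exact_mod_cast this
    have hcount1 : ((ρ*T:ℕ):ℝ) * ((1 - 1/(ρ:ℝ) + ε) * s.card)
        ≤ ((∑ u ∈ R, dg G s u : ℕ) : ℝ) := by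
      have hb : ∀ u ∈ R, ((1 - 1/(ρ:ℝ) + ε) * s.card) ≤ (dg G s u : ℝ) :=
        fun u hu => hdegρ u (hRs hu)
      calc ((ρ*T:ℕ):ℝ) * ((1 - 1/(ρ:ℝ) + ε) * s.card)
          = ∑ _u ∈ R, ((1 - 1/(ρ:ℝ) + ε) * s.card) := by
            rw [Finset.sum_const, hRcard, nsmul_eq_mul]
      _ ≤ ∑ u ∈ R, (dg G s u : ℝ) := Finset.sum_le_sum hb
      _ = ((∑ u ∈ R, dg G s u : ℕ) : ℝ) := by push_cast; rfl
    have hswap := sum_swap_dg G s R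
    have hbound : ∀ v ∈ s, v ∉ Gd →
        ((G.neighborFinset v ∩ R).card : ℝ) ≤ ((ρ*T:ℕ):ℝ) - T + t - 1 := by
      intro v hvs hvb
      have hbad : ¬ (∀ i, i < ρ → t ≤ (G.neighborFinset v ∩ P i).card) := by
        intro hgood
        exact hvb (Finset.mem_filter.2 ⟨hvs, hgood⟩)
      push_neg at hbad
      obtain ⟨i, hi, hlt⟩ := hbad
      have hsub : G.neighborFinset v ∩ R ⊆ (R \ P i) ∪ (G.neighborFinset v ∩ P i) := by
        intro x hx
        rcases Finset.mem_inter.1 hx with ⟨h1, h2⟩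
        by_cases hxP : x ∈ P i
        · exact Finset.mem_union_right _ (Finset.mem_inter.2 ⟨h1, hxP⟩)
        · exact Finset.mem_union_left _ (Finset.mem_sdiff.2 ⟨h2, hxP⟩)
      have h1 : (G.neighborFinset v ∩ R).card ≤ (R \ P i).card + (G.neighborFinset v ∩ P i).card :=
        le_trans (Finset.card_le_card hsub) (Finset.card_union_le _ _)
      have h2 : (R \ P i).card = ρ*T - T := by
        rw [Finset.card_sdiff_of_subset (hPR i), hRcard, hPcard i hi]
      have hTle : T ≤ ρ*T := Nat.le_mul_of_pos_left _ (by omega)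
      have h3 : (G.neighborFinset v ∩ R).card ≤ (ρ*T - T) + (t-1) := by omega
      calc ((G.neighborFinset v ∩ R).card : ℝ) ≤ (((ρ*T - T) + (t-1) : ℕ) : ℝ) :=
            Nat.cast_le.2 h3
      _ = ((ρ*T:ℕ):ℝ) - T + t - 1 := by
            push_cast [Nat.cast_sub hTle, Nat.cast_sub ht]
            ring
    have hsum : ((∑ v ∈ s, (G.neighborFinset v ∩ R).card : ℕ):ℝ)
        ≤ (Gd.card:ℝ) * ((ρ*T:ℕ):ℝ) + (s.card:ℝ) * (((ρ*T:ℕ):ℝ) - T + t - 1) := by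
      have hsplit : ∑ v ∈ s, ((G.neighborFinset v ∩ R).card : ℝ)
          = ∑ v ∈ Gd, ((G.neighborFinset v ∩ R).card : ℝ)
            + ∑ v ∈ s \ Gd, ((G.neighborFinset v ∩ R).card : ℝ) := by
        rw [← Finset.sum_sdiff hGds]
        ring
      have b1 : ∑ v ∈ Gd, ((G.neighborFinset v ∩ R).card : ℝ) ≤ (Gd.card:ℝ) * ((ρ*T:ℕ):ℝ) := by
        have : ∀ v ∈ Gd, ((G.neighborFinset v ∩ R).card : ℝ) ≤ ((ρ*T:ℕ):ℝ) := by
          intro v _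
          have : (G.neighborFinset v ∩ R).card ≤ ρ*T := by
            rw [← hRcard]; exact Finset.card_le_card (Finset.inter_subset_right)
          exact_mod_cast this
        calc ∑ v ∈ Gd, ((G.neighborFinset v ∩ R).card : ℝ) ≤ ∑ _v ∈ Gd, ((ρ*T:ℕ):ℝ) :=
              Finset.sum_le_sum this
        _ = (Gd.card:ℝ) * ((ρ*T:ℕ):ℝ) := by rw [Finset.sum_const, nsmul_eq_mul]
      have b2 : ∑ v ∈ s \ Gd, ((G.neighborFinset v ∩ R).card : ℝ)
          ≤ (s.card:ℝ) * (((ρ*T:ℕ):ℝ) - T + t - 1) := by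
        have hb : ∀ v ∈ s \ Gd, ((G.neighborFinset v ∩ R).card : ℝ)
            ≤ ((ρ*T:ℕ):ℝ) - T + t - 1 := by
          intro v hv
          rcases Finset.mem_sdiff.1 hv with ⟨h1, h2⟩
          exact hbound v h1 h2
        have hpos : (0:ℝ) ≤ ((ρ*T:ℕ):ℝ) - T + t - 1 := by
          have hTle : T ≤ ρ*T := Nat.le_mul_of_pos_left _ (by omega)
          have : (T:ℝ) ≤ ((ρ*T:ℕ):ℝ) := by exact_mod_cast hTle
          have ht1 : (1:ℝ) ≤ (t:ℝ) := by exact_mod_cast ht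
          linarith
        calc ∑ v ∈ s \ Gd, ((G.neighborFinset v ∩ R).card : ℝ)
            ≤ ∑ _v ∈ s \ Gd, (((ρ*T:ℕ):ℝ) - T + t - 1) := Finset.sum_le_sum hb
        _ = ((s \ Gd).card : ℝ) * (((ρ*T:ℕ):ℝ) - T + t - 1) := by
              rw [Finset.sum_const, nsmul_eq_mul]
        _ ≤ (s.card:ℝ) * (((ρ*T:ℕ):ℝ) - T + t - 1) := by
              apply mul_le_mul_of_nonneg_right _ hpos
              exact_mod_cast Finset.card_le_card (Finset.sdiff_subset)
      calc ((∑ v ∈ s, (G.neighborFinset v ∩ R).card : ℕ):ℝ)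
          = ∑ v ∈ s, ((G.neighborFinset v ∩ R).card : ℝ) := by push_cast; rfl
      _ ≤ _ := by rw [hsplit]; linarith
    have hρR : (1:ℝ) ≤ (ρ:ℝ) := by exact_mod_cast (by omega : 1 ≤ ρ)
    have hρcast : ((ρ*T:ℕ):ℝ) = (ρ:ℝ) * (T:ℝ) := by push_cast; ring
    have hGdlb : ε * (s.card:ℝ) / 2 ≤ (Gd.card : ℝ) := by
      have hkey : ((ρ*T:ℕ):ℝ) * ((1 - 1/(ρ:ℝ) + ε) * s.card)
          ≤ (Gd.card:ℝ) * ((ρ*T:ℕ):ℝ) + (s.card:ℝ) * (((ρ*T:ℕ):ℝ) - T + t - 1) := by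
        have hc : ((∑ u ∈ R, dg G s u : ℕ) : ℝ) = ((∑ v ∈ s, (G.neighborFinset v ∩ R).card : ℕ):ℝ) := by
          rw [hswap]
        linarith [hcount1, hsum]
      have hρ0 : (ρ:ℝ) ≠ 0 := by linarith
      have hlhs : ((ρ*T:ℕ):ℝ) * ((1 - 1/(ρ:ℝ) + ε) * s.card)
          = (s.card:ℝ) * (((ρ*T:ℕ):ℝ) - T + ε * (ρ:ℝ) * T) := by
        rw [hρcast]
        field_simp
      rw [hlhs] at hkey
      have hρTpos : (0:ℝ) < (ρ:ℝ)*T := by rw [← hρcast]; exact hρT0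
      rw [hρcast] at hkey
      have hscard0 : (0:ℝ) ≤ (s.card:ℝ) := Nat.cast_nonneg _
      have h2 : (s.card:ℝ) * (ε * (ρ:ℝ) * T - t + 1) ≤ (Gd.card:ℝ) * ((ρ:ℝ)*T) := by
        ring_nf at hkey ⊢
        linarith [hkey]
      have hεT : ε * (T:ℝ) ≤ ε * (ρ:ℝ) * T := by
        have hT0 : (0:ℝ) ≤ (T:ℝ) := Nat.cast_nonneg _
        have hp : (0:ℝ) ≤ ε * (T:ℝ) * ((ρ:ℝ)-1) :=
          mul_nonneg (mul_nonneg hε.le hT0) (by linarith)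
        ring_nf at hp ⊢
        linarith
      have h3 : ε * ((ρ:ℝ)*T)/2 ≤ ε * (ρ:ℝ) * T - t + 1 := by ring_nf at hTε hεT ⊢; linarith [hTε, hεT]
      have h4 := mul_le_mul_of_nonneg_left h3 hscard0
      rw [← mul_le_mul_iff_left₀ hρTpos]
      calc ε * (s.card:ℝ)/2 * ((ρ:ℝ)*T) = (s.card:ℝ) * (ε * ((ρ:ℝ)*T)/2) := by ring
      _ ≤ (s.card:ℝ) * (ε*(ρ:ℝ)*T - t + 1) := h4
      _ ≤ (Gd.card:ℝ) * ((ρ:ℝ)*T) := h2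
    have hGR : M*t ≤ (Gd \ R).card := by
      have h1 : (Gd.card:ℝ) - ((ρ*T:ℕ):ℝ) ≤ ((Gd \ R).card : ℝ) := by
        have := Finset.le_card_sdiff R Gd
        have h2 : (Gd.card:ℝ) - (R.card:ℝ) ≤ ((Gd \ R).card : ℝ) := by
          have h3 : Gd.card - R.card ≤ (Gd \ R).card := this
          have h4 : ((Gd.card - R.card : ℕ):ℝ) ≤ ((Gd \ R).card : ℝ) := Nat.cast_le.2 h3
          rcases le_or_gt R.card Gd.card with h5 | h5
          · rwa [Nat.cast_sub h5] at h4
          · have : (Gd.card:ℝ) < (R.card:ℝ) := by exact_mod_cast h5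
            have h6 : (0:ℝ) ≤ ((Gd \ R).card : ℝ) := Nat.cast_nonneg _
            linarith
        rwa [hRcard] at h2
      have h7 : ((M*t:ℕ):ℝ) ≤ ((Gd \ R).card : ℝ) := by linarith [hGdlb, hsε]
      exact_mod_cast h7
    set Q : V → ℕ → Finset (Fin (ρ*T)) := fun v i =>
      Finset.univ.filter (fun j => (j:ℕ) % ρ = i ∧ G.Adj v (f j)) with hQdef
    have hQcard : ∀ v ∈ Gd, ∀ i, i < ρ → t ≤ (Q v i).card := by
      intro v hv i hi
      have himg : (Q v i).image f = G.neighborFinset v ∩ P i := by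
        ext x
        simp only [hQdef, hPdef, Finset.mem_image, Finset.mem_filter, Finset.mem_univ,
          true_and, Finset.mem_inter, mem_neighborFinset]
        constructor
        · rintro ⟨j, ⟨hm, ha⟩, rfl⟩
          exact ⟨ha, j, hm, rfl⟩
        · rintro ⟨ha, j, hm, rfl⟩
          exact ⟨j, ⟨hm, ha⟩, rfl⟩
      have hg := (Finset.mem_filter.1 hv).2 i hi
      rw [← himg, Finset.card_image_of_injective _ hfinj] at hg
      exact hg
    set τ : V → (Fin ρ → Finset (Fin (ρ*T))) := fun v i => pick t (Q v (i:ℕ)) with hτdef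
    obtain ⟨σ, -, hσfib⟩ := Finset.exists_le_card_fiber_of_mul_le_card_of_maps_to
      (f := τ) (s := Gd \ R) (t := Finset.univ)
      (fun a _ => Finset.mem_univ _) Finset.univ_nonempty
      (by rw [Finset.card_univ]; exact hGR)
    set W := pick t ((Gd \ R).filter (fun v => τ v = σ)) with hWdef
    have hWcard : W.card = t := pick_card hσfib
    have hWsub : W ⊆ (Gd \ R).filter (fun v => τ v = σ) := pick_subset _ _
    have hWGd : ∀ w ∈ W, w ∈ Gd := fun w hw =>
      (Finset.mem_sdiff.1 (Finset.mem_filter.1 (hWsub hw)).1).1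
    have hWnR : ∀ w ∈ W, w ∉ R := fun w hw =>
      (Finset.mem_sdiff.1 (Finset.mem_filter.1 (hWsub hw)).1).2
    have hWτ : ∀ w ∈ W, τ w = σ := fun w hw => (Finset.mem_filter.1 (hWsub hw)).2
    have hWs : W ⊆ s := fun w hw => hGds (hWGd w hw)
    obtain ⟨w₀, hw₀⟩ : W.Nonempty := Finset.card_pos.1 (by omega)
    have hσsub : ∀ w ∈ W, ∀ i : Fin ρ, σ i ⊆ Q w (i:ℕ) := by
      intro w hw i
      rw [← hWτ w hw, hτdef]
      exact pick_subset _ _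
    have hσcard : ∀ i : Fin ρ, (σ i).card = t := by
      intro i
      rw [← hWτ w₀ hw₀, hτdef]
      exact pick_card (hQcard w₀ (hWGd _ hw₀) i i.2)
    have hσmod : ∀ (i : Fin ρ), ∀ j ∈ σ i, (j:ℕ) % ρ = (i:ℕ) := fun i j hj =>
      ((Finset.mem_filter.1 (hσsub w₀ hw₀ i hj)).2).1
    have hσadj : ∀ w ∈ W, ∀ (i : Fin ρ), ∀ j ∈ σ i, G.Adj w (f j) := by
      intro w hw i j hj
      exact ((Finset.mem_filter.1 (hσsub w hw i hj)).2).2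
    -- build the embedding
    set k := ρ + 1 with hkdef
    clear_value k
    have hkpos : 0 < k := by omega
    have hdiv : ∀ x : Fin (k*t), (x:ℕ)/k < t := by
      intro x
      exact Nat.div_lt_iff_lt_mul hkpos |>.2 (lt_of_lt_of_eq x.2 (mul_comm k t))
    set g' : Fin k → Fin t → V := fun i q =>
      if h : (i:ℕ) < ρ then f (enum (σ ⟨(i:ℕ), h⟩) (hσcard _) q)
      else enum W hWcard q with hg'def
    have hg'mem : ∀ i q, g' i q ∈ s := by
      intro i q
      simp only [hg'def]
      split
      · exact hfs _
      · exact hWs (enum_mem _ hWcard _)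
    have hg'adj : ∀ (i i' : Fin k) (q q' : Fin t), i ≠ i' → G.Adj (g' i q) (g' i' q') := by
      intro i i' q q' hne
      simp only [hg'def]
      by_cases h : (i:ℕ) < ρ <;> by_cases h' : (i':ℕ) < ρ
      · rw [dif_pos h, dif_pos h']
        apply f.map_rel'
        rw [turan_adj]
        have m1 := hσmod ⟨(i:ℕ), h⟩ _ (enum_mem _ (hσcard _) q)
        have m2 := hσmod ⟨(i':ℕ), h'⟩ _ (enum_mem _ (hσcard _) q')
        rw [m1, m2]
        intro hc
        exact hne (Fin.ext hc)
      · rw [dif_pos h, dif_neg h']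
        exact (hσadj _ (enum_mem _ hWcard q') ⟨(i:ℕ), h⟩ _
          (enum_mem _ (hσcard _) q)).symm
      · rw [dif_neg h, dif_pos h']
        exact hσadj _ (enum_mem _ hWcard q) ⟨(i':ℕ), h'⟩ _
          (enum_mem _ (hσcard _) q')
      · exfalso
        apply hne
        apply Fin.ext
        have hik := i.2
        have hik' := i'.2
        omega
    have hg'inj : ∀ (i i' : Fin k) (q q' : Fin t), g' i q = g' i' q' → i = i' ∧ q = q' := by
      intro i i' q q' heq
      simp only [hg'def] at heq
      by_cases h : (i:ℕ) < ρ <;> by_cases h' : (i':ℕ) < ρ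
      · rw [dif_pos h, dif_pos h'] at heq
        have hj := hfinj heq
        have m1 := hσmod ⟨(i:ℕ), h⟩ _ (enum_mem _ (hσcard _) q)
        have m2 := hσmod ⟨(i':ℕ), h'⟩ _ (enum_mem _ (hσcard _) q')
        rw [hj] at m1
        have hival : (i:ℕ) = (i':ℕ) := by rw [← m1, m2]
        have hii : i = i' := Fin.ext hival
        subst hii
        refine ⟨rfl, ?_⟩
        exact enum_inj (σ ⟨(i:ℕ), h⟩) (hσcard _) hj
      · rw [dif_pos h, dif_neg h'] at heq
        exfalso
        have hmem : enum W hWcard q' ∈ R := by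
          rw [← heq, hRdef]
          exact Finset.mem_image.2 ⟨_, Finset.mem_univ _, rfl⟩
        exact hWnR _ (enum_mem _ hWcard q') hmem
      · rw [dif_neg h, dif_pos h'] at heq
        exfalso
        have hmem : enum W hWcard q ∈ R := by
          rw [heq, hRdef]
          exact Finset.mem_image.2 ⟨_, Finset.mem_univ _, rfl⟩
        exact hWnR _ (enum_mem _ hWcard q) hmem
      · rw [dif_neg h, dif_neg h'] at heq
        have hik := i.2
        have hik' := i'.2
        refine ⟨Fin.ext (by omega), enum_inj W hWcard heq⟩
    refine ⟨⟨fun x => g' ⟨(x:ℕ) % k, Nat.mod_lt _ hkpos⟩ ⟨(x:ℕ)/k, hdiv x⟩, ?_⟩, ?_, ?_⟩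
    · intro a b hab
      rw [turan_adj] at hab
      apply hg'adj
      intro hc
      exact hab (congrArg Fin.val hc)
    · intro a b hab
      obtain ⟨h1, h2⟩ := hg'inj _ _ _ _ hab
      have e1 : (a:ℕ) % k = (b:ℕ) % k := congrArg Fin.val h1
      have e2 : (a:ℕ) / k = (b:ℕ) / k := congrArg Fin.val h2
      apply Fin.ext
      rw [← Nat.div_add_mod (a:ℕ) k, ← Nat.div_add_mod (b:ℕ) k, e1, e2]
    · intro x
      exact hg'mem _ _

theorem stmt3 (k t : ℕ) (hk : 2 ≤ k) (ht : 1 ≤ t) (ε : ℝ) (hε : 0 < ε) :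
    ∃ N : ℕ, ∀ n ≥ N, ∀ G : SimpleGraph (Fin n),
      (1 - 1 / ((k : ℝ) - 1) + ε) * (n.choose 2 : ℝ) ≤ (edgeCount G : ℝ) →
      Contains (turanGraph (k * t) k) G := by
  classical
  set c' : ℝ := 1 - 1/((k:ℝ)-1) + ε/2 with hc'
  clear_value c'
  have hkR : (1:ℝ) ≤ (k:ℝ) - 1 := by
    have : (2:ℝ) ≤ (k:ℝ) := by exact_mod_cast hk
    linarith
  have hc'0 : 0 ≤ c' := by
    have h1 : 1/((k:ℝ)-1) ≤ 1 := by
      rw [div_le_one (by linarith)]; linarith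
    rw [hc']; linarith
  obtain ⟨N₁, hmd⟩ := minDeg (k-1) t ht (ε/4) (by linarith)
  have hk' : k - 1 + 1 = k := by omega
  rw [hk'] at hmd
  set M₀ : ℕ := max N₁ (⌈4*c'/ε⌉₊ + 1) with hM₀
  set A : ℕ := M₀.choose 2 with hA
  refine ⟨⌈(2/ε)*(A:ℝ)⌉₊ + 2, ?_⟩
  intro n hn G hEdge
  letI : DecidableRel G.Adj := Classical.decRel _
  have hcards : (Finset.univ : Finset (Fin n)).card = n := by simp
  have hedge2 : 2*(c' * ((Finset.univ : Finset (Fin n)).card.choose 2 : ℝ) + (ε/2)*(n.choose 2:ℝ))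
      ≤ ((∑ u ∈ Finset.univ, dg G Finset.univ u : ℕ) : ℝ) := by
    rw [sumdeg_univ, hcards]
    have hid : c' * (n.choose 2:ℝ) + (ε/2)*(n.choose 2:ℝ)
        = (1 - 1/((k:ℝ)-1) + ε) * (n.choose 2:ℝ) := by rw [hc']; ring
    push_cast
    linarith [hEdge]
  obtain ⟨u, hu, hD, hmin⟩ := delete G c' ((ε/2)*(n.choose 2:ℝ)) hc'0 n Finset.univ hcards hedge2
  have hucard : M₀ ≤ u.card := by
    by_contra hlt
    push_neg at hlt
    have h1 : (u.card.choose 2 : ℝ) ≤ (A:ℝ) :=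
      Nat.cast_le.2 (Nat.choose_le_choose 2 (le_of_lt hlt))
    have h2 : (A:ℝ) < (ε/2)*(n.choose 2:ℝ) := by
      have hn2 : 2 ≤ n := le_trans (by omega) hn
      have h3 : n - 1 ≤ n.choose 2 := by
        have hh := two_mul_choose_two n
        have hh2 : 2*(n-1) ≤ n*(n-1) := Nat.mul_le_mul_right _ hn2
        omega
      have hceil : ⌈(2/ε)*(A:ℝ)⌉₊ < n - 1 := by omega
      have h4 : ((⌈(2/ε)*(A:ℝ)⌉₊ : ℕ):ℝ) < ((n-1:ℕ):ℝ) := by exact_mod_cast hceil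
      have h5 : (2/ε)*(A:ℝ) ≤ ((⌈(2/ε)*(A:ℝ)⌉₊:ℕ) : ℝ) := Nat.le_ceil _
      have h6 : ((n-1:ℕ):ℝ) ≤ (n.choose 2 : ℝ) := Nat.cast_le.2 h3
      have h7 : (2/ε)*(A:ℝ) < (n.choose 2:ℝ) := by linarith
      calc (A:ℝ) = (ε/2)*((2/ε)*(A:ℝ)) := by field_simp
      _ < (ε/2)*(n.choose 2:ℝ) := by
          apply mul_lt_mul_of_pos_left h7 (by positivity)
    linarith [hD, h1, h2]
  have hdeg : ∀ v ∈ u, (1 - 1/((k-1:ℕ):ℝ) + ε/4) * u.card ≤ (dg G u v : ℝ) := by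
    intro v hv
    have h1 := hmin v hv
    have hk1 : (1:ℕ) ≤ k := by omega
    have hcast : ((k-1:ℕ):ℝ) = (k:ℝ) - 1 := by
      push_cast [Nat.cast_sub hk1]; ring
    rw [hcast]
    have h3 : (⌈4*c'/ε⌉₊ + 1 : ℕ) ≤ u.card := le_trans (le_max_right _ _) hucard
    have h2 : c' ≤ (ε/4) * (u.card:ℝ) := by
      have h4 : 4*c'/ε ≤ ((⌈4*c'/ε⌉₊:ℕ):ℝ) := Nat.le_ceil _
      have h5 : ((⌈4*c'/ε⌉₊ + 1:ℕ):ℝ) ≤ (u.card:ℝ) := Nat.cast_le.2 h3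
      push_cast at h5
      rw [div_le_iff₀ hε] at h4
      nlinarith
    have hid2 : (1 - 1/((k:ℝ)-1) + ε/4) * (u.card:ℝ) = c'*(u.card:ℝ) - (c' - (1 - 1/((k:ℝ)-1) + ε/4)) * (u.card:ℝ) := by ring
    have hid3 : c' - (1 - 1/((k:ℝ)-1) + ε/4) = ε/4 := by rw [hc']; ring
    rw [hid2, hid3]
    linarith
  have hN₁ : N₁ ≤ u.card := le_trans (le_max_left _ _) hucard
  obtain ⟨g, hginj, -⟩ := hmd (Fin n) _ _ G _ u hN₁ hdeg
  exact ⟨g, hginj⟩
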